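/- For each n ∈ ℕ define dₙ : ℝ² × ℝ² → ℝ by dₙ((u,u'),(v,v')) := |u−v| + (1/n)|u'−v'|. Then each dₙ is a metric on ℝ², the sequence (dₙ) is a Cauchy sequence in D(ℝ²) with respect to the uniformity of pointwise convergence (the subspace uniformity inherited from the product uniformity on ℝ^(ℝ²×ℝ²)), but (dₙ) does not converge to any element of D(ℝ²); in particular D(ℝ²) is not a complete uniform space. -/

import Mathlib

def IsMetric {X : Type*} (ρ : X → X → ℝ) : Prop :=
  (∀ x y, 0 ≤ ρ x y) ∧ (∀ x y, ρ x y = 0 ↔ x = y) ∧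
  (∀ x y, ρ x y = ρ y x) ∧ (∀ x y z, ρ x z ≤ ρ x y + ρ y z)

def MetricOrZero {X : Type*} (ρ : X → X → ℝ) : Prop :=
  IsMetric ρ ∨ ρ = fun _ _ => 0

noncomputable def dseq (n : ℕ) : (ℝ × ℝ) → (ℝ × ℝ) → ℝ :=
  fun p q => |p.1 - q.1| + (1 / ((n : ℝ) + 1)) * |p.2 - q.2|

lemma dseq_isMetric (n : ℕ) : IsMetric (dseq n) := by
  have hc : (0:ℝ) < 1 / ((n:ℝ) + 1) := by positivity
  refine ⟨fun x y => by simp only [dseq]; positivity, fun x y => ?_, fun x y => ?_, fun x y z => ?_⟩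
  · constructor
    · intro h
      simp only [dseq] at h
      have h1 : |x.1 - y.1| = 0 ∧ (1 / ((n : ℝ) + 1)) * |x.2 - y.2| = 0 := by
        constructor <;> nlinarith [abs_nonneg (x.1 - y.1), abs_nonneg (x.2 - y.2),
          mul_nonneg hc.le (abs_nonneg (x.2 - y.2))]
      have h2 : x.1 = y.1 := by
        have := abs_eq_zero.mp h1.1; linarith
      have h3 : x.2 = y.2 := by
        have : |x.2 - y.2| = 0 := by
          rcases mul_eq_zero.mp h1.2 with h | h
          · exact absurd h (ne_of_gt hc)
          · exact h
        have := abs_eq_zero.mp this; linarith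
      exact Prod.ext h2 h3
    · rintro rfl; simp [dseq]
  · simp [dseq, abs_sub_comm]
  · have t1 := abs_sub_le x.1 y.1 z.1
    have t2 := abs_sub_le x.2 y.2 z.2
    simp only [dseq]
    nlinarith
theorem D_R2_not_complete :
    (∀ n, IsMetric (dseq n)) ∧
    ∃ h : ∀ n, MetricOrZero (dseq n),
      CauchySeq (fun n => (⟨dseq n, h n⟩ :
          {ρ : (ℝ × ℝ) → (ℝ × ℝ) → ℝ // MetricOrZero ρ})) ∧
      ¬ ∃ L : {ρ : (ℝ × ℝ) → (ℝ × ℝ) → ℝ // MetricOrZero ρ},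
        Filter.Tendsto (fun n => (⟨dseq n, h n⟩ :
            {ρ : (ℝ × ℝ) → (ℝ × ℝ) → ℝ // MetricOrZero ρ}))
          Filter.atTop (nhds L) := by
  have hmet := dseq_isMetric
  refine ⟨hmet, fun n => Or.inl (hmet n), ?_, ?_⟩
  · -- Cauchy: vals converge pointwise to the pseudometric (p,q) ↦ |p.1 - q.1|
    have hlim : Filter.Tendsto dseq Filter.atTop
        (nhds (fun p q => |p.1 - q.1| : (ℝ × ℝ) → (ℝ × ℝ) → ℝ)) := by
      rw [tendsto_pi_nhds]
      intro p
      rw [tendsto_pi_nhds]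
      intro q
      have : Filter.Tendsto (fun n : ℕ => (1 / ((n:ℝ) + 1)) * |p.2 - q.2|)
          Filter.atTop (nhds 0) := by
        have := tendsto_one_div_add_atTop_nhds_zero_nat (𝕜 := ℝ)
        simpa using this.mul_const |p.2 - q.2|
      have := this.const_add |p.1 - q.1|
      simpa [dseq] using this
    have : CauchySeq dseq := hlim.cauchySeq
    rw [CauchySeq, ← isUniformEmbedding_subtype_val.isUniformInducing.cauchy_map_iff,
      Filter.map_map]
    exact this
  · rintro ⟨L, hL⟩
    have hvals : Filter.Tendsto dseq Filter.atTop (nhds L.val) :=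
      (continuous_subtype_val.tendsto L).comp hL
    have hlim : Filter.Tendsto dseq Filter.atTop
        (nhds (fun p q => |p.1 - q.1| : (ℝ × ℝ) → (ℝ × ℝ) → ℝ)) := by
      rw [tendsto_pi_nhds]
      intro p
      rw [tendsto_pi_nhds]
      intro q
      have : Filter.Tendsto (fun n : ℕ => (1 / ((n:ℝ) + 1)) * |p.2 - q.2|)
          Filter.atTop (nhds 0) := by
        have := tendsto_one_div_add_atTop_nhds_zero_nat (𝕜 := ℝ)
        simpa using this.mul_const |p.2 - q.2|
      have := this.const_add |p.1 - q.1|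
      simpa [dseq] using this
    have hEq : L.val = (fun p q => |p.1 - q.1| : (ℝ × ℝ) → (ℝ × ℝ) → ℝ) :=
      tendsto_nhds_unique hvals hlim
    rcases L.property with hM | hZ
    · have := (hM.2.1 (0, 0) (0, 1)).mp (by simp [hEq])
      have := congrArg Prod.snd this
      norm_num at this
    · have : L.val (0, 0) (1, 0) = 0 := by rw [hZ]
      rw [hEq] at this
      norm_num at this
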